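/- Consider a binary tree over a finite set $S$ of key-value pairs with distinct keys, where leaves hold the elements and each internal node $n$ with key $k_n$ has all leaf elements of its left subtree with key $< k_n$ and all leaf elements of its right subtree with key $\ge k_n$. Let $f$ be an additive aggregate function with operation $\oplus$ of an abelian group $(B, \oplus)$ with identity $e$, and let each node's aggValue be $f$ of the set of elements in its subtree's leaves. Then the traversal template—starting with accumulator $e$, at each internal node setting $c = \mathrm{acc} \oplus \mathrm{aggValue}(\mathrm{left\ child})$, descending right (updating $\mathrm{acc} := c$) iff a predicate holds, else descending left—terminates at a leaf $L$ with final accumulator equal to $f(\{a \in S : \mathrm{key}(a) < \mathrm{key}(L)\})$ when that set is nonempty (and $e$ if it is empty). -/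

import Mathlib

/-- An external binary tree: elements (key-value pairs, abstracted as type `A`)
are held in leaves; internal nodes carry a routing key. -/
inductive ExtTree (K A : Type*) where
  | leaf (a : A) : ExtTree K A
  | node (k : K) (l r : ExtTree K A) : ExtTree K A

namespace ExtTree

variable {K A B : Type*}

/-- The set of elements held in the tree's leaves. -/
def elems [DecidableEq A] : ExtTree K A → Finset A
  | leaf a => {a}
  | node _ l r => l.elems ∪ r.elems

/-- The external-BST invariant: at every internal node with key `k`, all left
subtree elements have key `< k` and all right subtree elements have key `≥ k`. -/
def isBST [DecidableEq A] [LinearOrder K] (key : A → K) : ExtTree K A → Prop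
  | leaf _ => True
  | node k l r => (∀ a ∈ l.elems, key a < k) ∧ (∀ a ∈ r.elems, k ≤ key a) ∧
      isBST key l ∧ isBST key r

/-- The aggregate traversal template (Figure 1): starting with accumulator
`acc`, at each internal node compute `c = acc ⊕ aggValue(left child)` (where the
aggValue of a subtree is `f` of its leaf elements), descend right with
accumulator `c` iff the predicate `p c k` holds, else descend left.
Returns the final accumulator and the reached leaf's element. -/
def traverseAgg [DecidableEq A] [AddCommGroup B] (f : Finset A → B)
    (p : B → K → Bool) (acc : B) : ExtTree K A → B × A
  | leaf a => (acc, a)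
  | node k l r =>
      let c := acc + f l.elems
      if p c k then traverseAgg f p c r else traverseAgg f p acc l

end ExtTree

theorem ExtTree.elems_nonempty {K A : Type*} [DecidableEq A] (T : ExtTree K A) :
    T.elems.Nonempty := by
  induction T with
  | leaf a => exact ⟨a, by simp [ExtTree.elems]⟩
  | node k l r ihl ihr =>
      obtain ⟨a, ha⟩ := ihl
      exact ⟨a, by simp [ExtTree.elems, Finset.mem_union]; exact Or.inl ha⟩

theorem ExtTree.traverseAgg_snd_mem {K A B : Type*} [DecidableEq A] [AddCommGroup B]
    (f : Finset A → B) (p : B → K → Bool) (acc : B) (T : ExtTree K A) :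
    (T.traverseAgg f p acc).2 ∈ T.elems := by
  induction T generalizing acc with
  | leaf a => simp [ExtTree.traverseAgg, ExtTree.elems]
  | node k l r ihl ihr =>
      simp only [ExtTree.traverseAgg, ExtTree.elems, Finset.mem_union]
      split
      · exact Or.inr (ihr _)
      · exact Or.inl (ihl _)

theorem traverseAgg_correct_aux {K A B : Type*} [LinearOrder K] [DecidableEq A]
    [AddCommGroup B] (key : A → K) (f : Finset A → B)
    (hadd : ∀ X1 X2 : Finset A, X1.Nonempty → X2.Nonempty → Disjoint X1 X2 →
      f (X1 ∪ X2) = f X1 + f X2)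
    (hempty : f (∅ : Finset A) = 0)
    (p : B → K → Bool) (T : ExtTree K A)
    (hbst : T.isBST key) (acc : B) :
    (T.traverseAgg f p acc).1 =
      acc + f (T.elems.filter (fun a => key a < key (T.traverseAgg f p acc).2)) := by
  induction T generalizing acc with
  | leaf a =>
      show acc = acc + f (({a} : Finset A).filter (fun a_1 => key a_1 < key a))
      simp [ExtTree.traverseAgg, ExtTree.elems, Finset.filter_singleton, hempty]
  | node k l r ihl ihr =>
      obtain ⟨hlk, hkr, hbl, hbr⟩ := hbst
      simp only [ExtTree.traverseAgg, ExtTree.elems]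
      split_ifs with hp
      · -- went right
        have hIH := ihr hbr (acc + f l.elems)
        set res := r.traverseAgg f p (acc + f l.elems) with hres
        have hmem : res.2 ∈ r.elems := ExtTree.traverseAgg_snd_mem f p _ r
        have hL : k ≤ key res.2 := hkr _ hmem
        have hfilter : (l.elems ∪ r.elems).filter (fun a => key a < key res.2) =
            l.elems ∪ r.elems.filter (fun a => key a < key res.2) := by
          ext a
          simp only [Finset.mem_filter, Finset.mem_union]
          constructor
          · rintro ⟨h1 | h1, h2⟩
            · exact Or.inl h1
            · exact Or.inr ⟨h1, h2⟩
          · rintro (h1 | ⟨h1, h2⟩)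
            · exact ⟨Or.inl h1, lt_of_lt_of_le (hlk _ h1) hL⟩
            · exact ⟨Or.inr h1, h2⟩
        rw [hfilter]
        by_cases hne : (r.elems.filter (fun a => key a < key res.2)).Nonempty
        · have hdisj : Disjoint l.elems (r.elems.filter (fun a => key a < key res.2)) := by
            rw [Finset.disjoint_left]
            intro a hal har
            exact absurd (hkr _ (Finset.mem_of_mem_filter a har)) (not_le.mpr (hlk _ hal))
          rw [hIH, hadd _ _ (ExtTree.elems_nonempty l) hne hdisj, add_assoc]
        · rw [Finset.not_nonempty_iff_eq_empty] at hne
          rw [hne, hempty, add_zero] at hIH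
          rw [hne, Finset.union_empty]
          exact hIH
      · -- went left
        have hIH := ihl hbl acc
        set res := l.traverseAgg f p acc with hres
        have hmem : res.2 ∈ l.elems := ExtTree.traverseAgg_snd_mem f p _ l
        have hL : key res.2 < k := hlk _ hmem
        have hfilter : (l.elems ∪ r.elems).filter (fun a => key a < key res.2) =
            l.elems.filter (fun a => key a < key res.2) := by
          ext a
          simp only [Finset.mem_filter, Finset.mem_union]
          constructor
          · rintro ⟨h1 | h1, h2⟩
            · exact ⟨h1, h2⟩
            · exact absurd h2 (not_lt.mpr (le_of_lt (lt_of_lt_of_le hL (hkr _ h1))))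
          · rintro ⟨h1, h2⟩
            exact ⟨Or.inl h1, h2⟩
        rw [hfilter]
        exact hIH

/-- Correctness of the aggregate traversal template: on an external BST with
distinct keys and an additive aggregate function `f` into an abelian group
(extended by `f ∅ = 0`), the traversal starting from accumulator `0` ends at a
leaf `L` with final accumulator `f {a ∈ S : key a < key L}` (which is `0` when
that set is empty). -/
theorem traverseAgg_correct {K A B : Type*} [LinearOrder K] [DecidableEq A]
    [AddCommGroup B] (key : A → K) (f : Finset A → B)
    (hadd : ∀ X1 X2 : Finset A, X1.Nonempty → X2.Nonempty → Disjoint X1 X2 →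
      f (X1 ∪ X2) = f X1 + f X2)
    (hempty : f (∅ : Finset A) = 0)
    (p : B → K → Bool) (T : ExtTree K A)
    (hbst : T.isBST key)
    (hinj : Set.InjOn key (T.elems : Set A)) :
    (T.traverseAgg f p 0).1 =
      f (T.elems.filter (fun a => key a < key (T.traverseAgg f p 0).2)) := by
  rw [traverseAgg_correct_aux key f hadd hempty p T hbst 0, zero_add]
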